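/- 3·Λ(π/3) = 2·Λ(π/6), i.e., the constant v₃ (the volume of the regular ideal hyperbolic tetrahedron) satisfies v₃ = 3Λ(π/3) = 2Λ(π/6). -/

import Mathlib

open Real

/-- The Lobachevsky function `Λ(x) = -∫₀ˣ log |2 sin t| dt`. -/
noncomputable def lobachevsky (x : ℝ) : ℝ :=
  -∫ t in (0:ℝ)..x, Real.log |2 * Real.sin t|

namespace LobachevskyAux

open MeasureTheory intervalIntegral Set Filter

/-- `log` is interval integrable on `[0,1]`. -/
lemma log_II_01 : IntervalIntegrable Real.log volume 0 1 := by
  have h : IntegrableOn (fun x : ℝ => -Real.log x) (Ioc (0:ℝ) 1) volume := by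
    apply intervalIntegral.integrableOn_deriv_of_nonneg
      (g := fun x : ℝ => x - x * Real.log x)
    · exact (continuous_id.sub Real.continuous_mul_log).continuousOn
    · intro x hx
      have h1 : HasDerivAt (fun x : ℝ => x * Real.log x) (Real.log x + 1) x :=
        Real.hasDerivAt_mul_log (ne_of_gt hx.1)
      have h2 := (hasDerivAt_id x).sub h1
      exact h2.congr_deriv (by ring)
    · intro x hx
      simpa using Real.log_nonpos hx.1.le hx.2.le
  have h3 : IntervalIntegrable (fun x : ℝ => -Real.log x) volume 0 1 :=
    (intervalIntegrable_iff_integrableOn_Ioc_of_le zero_le_one).mpr h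
  have h4 := h3.neg
  have h5 : Real.log = fun x : ℝ => -(-Real.log x) := by funext x; simp
  rw [h5]; exact h4

lemma log_II_0c {c : ℝ} (hc : 0 ≤ c) : IntervalIntegrable Real.log volume 0 c := by
  rcases le_total c 1 with h | h
  · exact log_II_01.mono_set (by
      rw [uIcc_of_le hc, uIcc_of_le zero_le_one]
      exact Icc_subset_Icc le_rfl h)
  · refine log_II_01.trans ?_
    apply ContinuousOn.intervalIntegrable
    apply Real.continuousOn_log.mono
    intro x hx
    rw [uIcc_of_le h] at hx
    simp only [mem_compl_iff, mem_singleton_iff]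
    intro h0
    rw [h0] at hx
    linarith [hx.1]

lemma logabs_II (a b : ℝ) :
    IntervalIntegrable (fun x : ℝ => Real.log |x|) volume a b := by
  have key : ∀ c : ℝ, 0 ≤ c →
      IntervalIntegrable (fun x : ℝ => Real.log |x|) volume 0 c := by
    intro c hc
    have h := (intervalIntegrable_iff_integrableOn_Ioc_of_le hc).mp (log_II_0c hc)
    have h2 : IntegrableOn (fun x : ℝ => Real.log |x|) (Ioc 0 c) volume :=
      h.congr_fun (fun x hx => by rw [abs_of_pos hx.1]) measurableSet_Ioc
    exact (intervalIntegrable_iff_integrableOn_Ioc_of_le hc).mpr h2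
  have key2 : ∀ c : ℝ, IntervalIntegrable (fun x : ℝ => Real.log |x|) volume 0 c := by
    intro c
    rcases le_total 0 c with h | h
    · exact key c h
    · apply (IntervalIntegrable.iff_comp_neg).mpr
      simpa using key (-c) (by linarith)
  exact (key2 a).symm.trans (key2 b)

/-- Integrability of `log |2 sin t|` on an interval of length `π` around the
singularity `n·π`. -/
lemma F_integrableOn_near (n : ℤ) :
    IntegrableOn (fun t : ℝ => Real.log |2 * Real.sin t|)
      (Icc ((n:ℝ)*π - π/2) ((n:ℝ)*π + π/2)) volume := by
  set c : ℝ := (n:ℝ) * π with hc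
  set s : Set ℝ := Icc (c - π/2) (c + π/2) with hs
  have hle : c - π/2 ≤ c + π/2 := by linarith [pi_pos]
  have hL : IntegrableOn (fun t : ℝ => Real.log |t - c|) s volume := by
    have h := (logabs_II (-(π/2)) (π/2)).comp_sub_right c
    have h2 : IntervalIntegrable (fun t : ℝ => Real.log |t - c|) volume
        (c - π/2) (c + π/2) := by
      have e1 : -(π/2) + c = c - π/2 := by ring
      have e2 : π/2 + c = c + π/2 := by ring
      rwa [e1, e2] at h
    exact (intervalIntegrable_iff_integrableOn_Icc_of_le hle).mp h2
  have hE : IntegrableOn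
      (fun t : ℝ => Real.log |2 * Real.sin t| - Real.log |t - c|) s volume := by
    have hmeas : AEStronglyMeasurable
        (fun t : ℝ => Real.log |2 * Real.sin t| - Real.log |t - c|)
        (volume.restrict s) := by
      apply Measurable.aestronglyMeasurable
      exact (Real.measurable_log.comp ((Real.measurable_sin.const_mul 2).abs)).sub
        (Real.measurable_log.comp ((measurable_id.sub_const c).abs))
    have hconst : IntegrableOn (fun _ : ℝ => Real.log 2) s volume := by
      exact integrableOn_const measure_Icc_lt_top.ne
    apply Integrable.mono' hconst hmeas
    have hne : ∀ᵐ t : ℝ ∂volume, t ≠ c := by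
      rw [ae_iff]
      simpa using Real.volume_singleton
    filter_upwards [ae_restrict_of_ae hne, ae_restrict_mem measurableSet_Icc]
      with t ht hts
    -- core estimate
    set u : ℝ := t - c with hu
    have hu0 : u ≠ 0 := sub_ne_zero.mpr ht
    have huabs : |u| ≤ π / 2 := by
      rw [abs_le]
      constructor <;> [linarith [hts.1]; linarith [hts.2]]
    have hsin : |Real.sin t| = |Real.sin u| := by
      have ht' : t = u + (n:ℝ) * π := by rw [hu]; ring
      rcases Int.even_or_odd n with he | ho
      · rw [ht', Real.sin_add_int_mul_pi, he.neg_one_zpow, one_mul]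
      · rw [ht', Real.sin_add_int_mul_pi, ho.neg_one_zpow, neg_one_mul, abs_neg]
    have habs_sin : Real.sin |u| = |Real.sin u| := by
      rcases abs_cases u with ⟨h1, h2⟩ | ⟨h1, h2⟩
      · rw [h1, abs_of_nonneg]
        exact Real.sin_nonneg_of_nonneg_of_le_pi h2 (by linarith [pi_pos, huabs, abs_of_nonneg h2])
      · rw [h1, Real.sin_neg]
        rw [abs_of_nonpos]
        apply Real.sin_nonpos_of_nonpos_of_neg_pi_le h2.le
        have : |u| = -u := h1
        linarith [huabs, pi_pos, this ▸ huabs]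
    have hjordan : 2 / π * |u| ≤ |Real.sin u| := by
      rw [← habs_sin]
      exact Real.mul_le_sin (abs_nonneg u) huabs
    have hup : |Real.sin u| ≤ |u| := by
      rw [← habs_sin]
      exact Real.sin_le (abs_nonneg u)
    have hu_pos : 0 < |u| := abs_pos.mpr hu0
    have hsin_pos : 0 < |Real.sin u| := by
      have : 0 < 2 / π * |u| := by positivity
      linarith
    have hexpand : Real.log |2 * Real.sin t| =
        Real.log 2 + Real.log |Real.sin u| := by
      rw [abs_mul, hsin, abs_two, Real.log_mul two_ne_zero hsin_pos.ne']
    have hupper : Real.log |2 * Real.sin t| - Real.log |t - c| ≤ Real.log 2 := by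
      rw [hexpand, ← hu]
      have : Real.log |Real.sin u| ≤ Real.log |u| := Real.log_le_log hsin_pos hup
      linarith
    have hlower : -Real.log 2 ≤ Real.log |2 * Real.sin t| - Real.log |t - c| := by
      rw [hexpand, ← hu]
      have h1 : |u| ≤ π / 2 * |Real.sin u| := by
        have hπ : 0 < π := pi_pos
        have := mul_le_mul_of_nonneg_left hjordan (le_of_lt (by positivity : (0:ℝ) < π / 2))
        calc |u| = π / 2 * (2 / π * |u|) := by field_simp
        _ ≤ π / 2 * |Real.sin u| := this
      have h2 : Real.log |u| ≤ Real.log (π / 2) + Real.log |Real.sin u| := by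
        calc Real.log |u| ≤ Real.log (π / 2 * |Real.sin u|) :=
          Real.log_le_log hu_pos h1
        _ = Real.log (π / 2) + Real.log |Real.sin u| :=
          Real.log_mul (by positivity) hsin_pos.ne'
      have h3 : Real.log (π / 2) ≤ Real.log 2 + Real.log 2 := by
        rw [← Real.log_mul two_ne_zero two_ne_zero]
        apply Real.log_le_log (by positivity)
        linarith [Real.pi_le_four]
      linarith
    rw [Real.norm_eq_abs, abs_le]
    exact ⟨hlower, hupper⟩
  have hfun : (fun t : ℝ => Real.log |2 * Real.sin t|) =
      fun t : ℝ => Real.log |t - c| +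
        (Real.log |2 * Real.sin t| - Real.log |t - c|) := by
    funext t; ring
  rw [hfun]
  exact hL.add hE

/-- `log |2 sin t|` is interval integrable on every interval. -/
lemma F_II (a b : ℝ) :
    IntervalIntegrable (fun t : ℝ => Real.log |2 * Real.sin t|) volume a b := by
  have hloc : LocallyIntegrable (fun t : ℝ => Real.log |2 * Real.sin t|) volume := by
    intro x
    rcases eq_or_ne (Real.sin x) 0 with hx | hx
    · obtain ⟨n, hn⟩ := Real.sin_eq_zero_iff.mp hx
      refine ⟨Icc ((n:ℝ)*π - π/2) ((n:ℝ)*π + π/2), ?_, F_integrableOn_near n⟩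
      refine Icc_mem_nhds ?_ ?_ <;> rw [hn] <;> linarith [pi_pos]
    · have hU : IsOpen {t : ℝ | Real.sin t ≠ 0} :=
        isOpen_ne.preimage Real.continuous_sin
      obtain ⟨ε, hε, hsub⟩ := Metric.isOpen_iff.mp hU x hx
      refine ⟨Metric.closedBall x (ε/2), Metric.closedBall_mem_nhds x (by positivity), ?_⟩
      apply ContinuousOn.integrableOn_compact (isCompact_closedBall x (ε/2))
      intro t ht
      have htU : Real.sin t ≠ 0 := by
        apply hsub
        rw [Metric.mem_ball]
        calc dist t x ≤ ε/2 := Metric.mem_closedBall.mp ht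
        _ < ε := by linarith
      apply ContinuousAt.continuousWithinAt
      apply Real.continuousAt_log ?_ |>.comp
        (((continuous_const.mul Real.continuous_sin).abs).continuousAt)
      simp only [ne_eq, abs_eq_zero, mul_eq_zero, OfNat.ofNat_ne_zero, false_or]
      simpa using htU
  have h := hloc.integrableOn_isCompact (isCompact_uIcc (a := a) (b := b))
  exact intervalIntegrable_iff.mpr (h.mono_set Ioc_subset_Icc_self)

/-- The zero set of `sin` is null. -/
lemma sin_zero_null : volume {t : ℝ | Real.sin t = 0} = 0 := by
  apply Set.Countable.measure_zero
  apply Set.Countable.mono ?_ (Set.countable_range (fun n : ℤ => (n:ℝ) * π))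
  intro t ht
  obtain ⟨n, hn⟩ := Real.sin_eq_zero_iff.mp ht
  exact ⟨n, hn⟩

/-- The zero set of `cos` is null. -/
lemma cos_zero_null : volume {t : ℝ | Real.cos t = 0} = 0 := by
  apply Set.Countable.measure_zero
  apply Set.Countable.mono ?_
    (Set.countable_range (fun n : ℤ => (2 * (n:ℝ) + 1) * π / 2))
  intro t ht
  obtain ⟨n, hn⟩ := Real.cos_eq_zero_iff.mp ht
  exact ⟨n, hn.symm⟩

/-- The duplication formula, in integral form. -/
lemma dup (x : ℝ) :
    (∫ t in (0:ℝ)..2*x, Real.log |2 * Real.sin t|) =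
      2 * (∫ t in (0:ℝ)..x, Real.log |2 * Real.sin t|) +
      2 * ((∫ t in (0:ℝ)..x + π/2, Real.log |2 * Real.sin t|) -
        ∫ t in (0:ℝ)..π/2, Real.log |2 * Real.sin t|) := by
  have step1 : (∫ t in (0:ℝ)..x, Real.log |2 * Real.sin (2 * t)|) =
      (2:ℝ)⁻¹ • ∫ t in (0:ℝ)..2*x, Real.log |2 * Real.sin t| := by
    have := intervalIntegral.integral_comp_mul_left (a := (0:ℝ)) (b := x)
      (fun t => Real.log |2 * Real.sin t|) (c := (2:ℝ)) two_ne_zero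
    simpa using this
  have hae : ∀ᵐ t : ℝ, Real.sin t ≠ 0 ∧ Real.cos t ≠ 0 := by
    have h1 : ∀ᵐ t : ℝ, Real.sin t ≠ 0 := by
      rw [ae_iff]; simpa using sin_zero_null
    have h2 : ∀ᵐ t : ℝ, Real.cos t ≠ 0 := by
      rw [ae_iff]; simpa using cos_zero_null
    exact h1.and h2
  have step2 : (∫ t in (0:ℝ)..x, Real.log |2 * Real.sin (2 * t)|) =
      ∫ t in (0:ℝ)..x,
        (Real.log |2 * Real.sin t| + Real.log |2 * Real.sin (t + π/2)|) := by
    apply intervalIntegral.integral_congr_ae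
    filter_upwards [hae] with t ht _
    obtain ⟨hs, hc⟩ := ht
    rw [Real.sin_two_mul, Real.sin_add_pi_div_two]
    have h2 : (2:ℝ) * (2 * Real.sin t * Real.cos t) =
        (2 * Real.sin t) * (2 * Real.cos t) := by ring
    rw [h2, abs_mul, Real.log_mul]
    · simp [abs_eq_zero, hs]
    · simp [abs_eq_zero, hc]
  have hIs : IntervalIntegrable (fun t : ℝ => Real.log |2 * Real.sin t|)
      volume 0 x := F_II 0 x
  have hIc : IntervalIntegrable (fun t : ℝ => Real.log |2 * Real.sin (t + π/2)|)
      volume 0 x := by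
    have := (F_II (π/2) (x + π/2)).comp_add_right (π/2)
    simpa using this
  have step3 : (∫ t in (0:ℝ)..x,
        (Real.log |2 * Real.sin t| + Real.log |2 * Real.sin (t + π/2)|)) =
      (∫ t in (0:ℝ)..x, Real.log |2 * Real.sin t|) +
      ∫ t in (0:ℝ)..x, Real.log |2 * Real.sin (t + π/2)| :=
    intervalIntegral.integral_add hIs hIc
  have step4 : (∫ t in (0:ℝ)..x, Real.log |2 * Real.sin (t + π/2)|) =
      ∫ t in (π/2:ℝ)..x + π/2, Real.log |2 * Real.sin t| := by
    have := intervalIntegral.integral_comp_add_right (a := (0:ℝ)) (b := x)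
      (fun t => Real.log |2 * Real.sin t|) (π/2)
    simpa using this
  have step5 : (∫ t in (0:ℝ)..π/2, Real.log |2 * Real.sin t|) +
      (∫ t in (π/2:ℝ)..x + π/2, Real.log |2 * Real.sin t|) =
      ∫ t in (0:ℝ)..x + π/2, Real.log |2 * Real.sin t| :=
    intervalIntegral.integral_add_adjacent_intervals (F_II 0 (π/2))
      (F_II (π/2) (x + π/2))
  have h2inv : (2:ℝ)⁻¹ • (∫ t in (0:ℝ)..2*x, Real.log |2 * Real.sin t|) =
      (2:ℝ)⁻¹ * ∫ t in (0:ℝ)..2*x, Real.log |2 * Real.sin t| := rfl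
  rw [h2inv] at step1
  have := step1.symm.trans (step2.trans step3)
  linarith [step4, step5, this]

/-- The reflection formula, in integral form. -/
lemma refl (x : ℝ) :
    (∫ t in (0:ℝ)..π - x, Real.log |2 * Real.sin t|) =
      (∫ t in (0:ℝ)..π, Real.log |2 * Real.sin t|) -
        ∫ t in (0:ℝ)..x, Real.log |2 * Real.sin t| := by
  have h1 : (∫ t in (0:ℝ)..x, Real.log |2 * Real.sin t|) =
      ∫ t in (π - x:ℝ)..π, Real.log |2 * Real.sin t| := by
    have := intervalIntegral.integral_comp_sub_left (a := (0:ℝ)) (b := x)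
      (fun t => Real.log |2 * Real.sin t|) π
    simp only [Real.sin_pi_sub, sub_zero] at this
    exact this.symm ▸ this
  have h2 : (∫ t in (0:ℝ)..π - x, Real.log |2 * Real.sin t|) +
      (∫ t in (π - x:ℝ)..π, Real.log |2 * Real.sin t|) =
      ∫ t in (0:ℝ)..π, Real.log |2 * Real.sin t| :=
    intervalIntegral.integral_add_adjacent_intervals (F_II 0 (π - x))
      (F_II (π - x) π)
  linarith [h1, h2]

end LobachevskyAux

/-- `3·Λ(π/3) = 2·Λ(π/6)`: two expressions for the volume `v₃` of the regular
ideal hyperbolic tetrahedron. -/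
theorem three_lob_pi_div_three_eq_two_lob_pi_div_six :
    3 * lobachevsky (Real.pi / 3) = 2 * lobachevsky (Real.pi / 6) := by
  have h1 := LobachevskyAux.dup (π/2)
  rw [show (2:ℝ) * (π/2) = π by ring, show (π:ℝ)/2 + π/2 = π by ring] at h1
  have h2 := LobachevskyAux.dup (π/4)
  rw [show (2:ℝ) * (π/4) = π/2 by ring, show (π:ℝ)/4 + π/2 = π - π/4 by ring] at h2
  have h3 := LobachevskyAux.refl (π/4)
  have h4 := LobachevskyAux.dup (π/6)
  rw [show (2:ℝ) * (π/6) = π/3 by ring, show (π:ℝ)/6 + π/2 = π - π/3 by ring] at h4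
  have h5 := LobachevskyAux.refl (π/3)
  unfold lobachevsky
  linarith
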